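/- Let τ_m > 0 and let z be a complex number with Im(z) > 0. Then (1/√π)·∫_0^{τ_m} ( ∑_{k∈ℤ} exp(−(τ + 2kτ_m)²/4) )·exp(izτ) dτ = i·(1 − exp(iτ_m z))/(τ_m·z) + 2i·τ_m·z·∑_{n=1}^{∞} exp(−n²π²/τ_m²)·((−1)^n·exp(iτ_m z) − 1)/(n²π² − τ_m²z²), where the series on the right converges absolutely. -/

import Mathlib

open Real MeasureTheory Complex

/-- For `τm > 0` and `z : ℂ` with `Im z > 0`,
`(1/√π)·∫_0^{τm} (∑_{k∈ℤ} exp(−(τ + 2kτm)²/4))·exp(izτ) dτ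
  = i·(1 − exp(iτm z))/(τm z)
    + 2i·τm·z·∑_{n=1}^∞ exp(−n²π²/τm²)·((−1)ⁿ·exp(iτm z) − 1)/(n²π² − τm²z²)`,
where the series on the right converges absolutely. -/
lemma aux_summable_int_gauss {c : ℝ} (hc : 0 < c) :
    Summable (fun n : ℤ => rexp (-c * (n:ℝ)^2)) := by
  have hnat : Summable (fun n : ℕ => rexp (-c * (n:ℝ)^2)) := by
    refine Summable.of_nonneg_of_le (fun n => (Real.exp_pos _).le) (fun n => ?_)
      (summable_geometric_of_lt_one (Real.exp_pos (-c)).le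
        (Real.exp_lt_one_iff.mpr (by linarith)))
    rw [← Real.exp_nat_mul]
    apply Real.exp_le_exp.mpr
    have h1 : (n:ℝ) ≤ (n:ℝ)^2 := by
      rcases Nat.eq_zero_or_pos n with h | h
      · simp [h]
      · nlinarith [(Nat.one_le_cast (α := ℝ)).mpr h]
    nlinarith
  apply Summable.of_nat_of_neg <;> simpa using hnat

lemma aux_poisson (τm : ℝ) (hτm : 0 < τm) (τ : ℝ) :
    ((∑' k : ℤ, Real.exp (-(τ + 2 * k * τm) ^ 2 / 4) : ℝ) : ℂ) =
      ((Real.sqrt π : ℂ) / τm) *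
        ∑' n : ℤ, cexp (-(n:ℂ)^2 * π^2 / τm^2 + I * n * π * τ / τm) := by
  have hπ : (0:ℝ) < π := Real.pi_pos
  have hπ' : (π:ℂ) ≠ 0 := Complex.ofReal_ne_zero.mpr hπ.ne'
  have hτm' : (τm:ℂ) ≠ 0 := Complex.ofReal_ne_zero.mpr hτm.ne'
  set a : ℂ := ((τm^2 / π : ℝ) : ℂ) with ha_def
  have ha : 0 < a.re := by rw [ha_def, Complex.ofReal_re]; positivity
  set b : ℂ := ((-(τm * τ) / (2*π) : ℝ) : ℂ) with hb_def
  have key := Complex.tsum_exp_neg_quadratic ha b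
  have h1 : ∀ k : ℤ, ((Real.exp (-(τ + 2 * k * τm) ^ 2 / 4) : ℝ) : ℂ)
      = cexp (-π * a * k ^ 2 + 2 * π * b * k) * cexp (-(τ:ℂ)^2/4) := by
    intro k
    rw [Complex.ofReal_exp, ← Complex.exp_add]
    congr 1
    push_cast [ha_def, hb_def]
    field_simp
    ring
  have h2 : ∀ n : ℤ, cexp (-π / a * ((n:ℂ) + I * b) ^ 2) * cexp (-(τ:ℂ)^2/4)
      = cexp (-(n:ℂ)^2 * π^2 / τm^2 + I * n * π * τ / τm) := by
    intro n
    rw [← Complex.exp_add]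
    congr 1
    push_cast [ha_def, hb_def]
    field_simp
    ring_nf
    rw [Complex.I_sq]
    ring
  have ha12 : a ^ (1/2 : ℂ) = ((τm / Real.sqrt π : ℝ) : ℂ) := by
    rw [ha_def, show (1/2:ℂ) = ((1/2:ℝ):ℂ) by norm_num,
      ← Complex.ofReal_cpow (by positivity)]
    congr 1
    rw [← Real.sqrt_eq_rpow, Real.sqrt_div (sq_nonneg τm), Real.sqrt_sq hτm.le]
  calc ((∑' k : ℤ, Real.exp (-(τ + 2 * k * τm) ^ 2 / 4) : ℝ) : ℂ)
      = ∑' k : ℤ, ((Real.exp (-(τ + 2 * k * τm) ^ 2 / 4) : ℝ) : ℂ) := Complex.ofReal_tsum _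
    _ = (∑' k : ℤ, cexp (-π * a * k ^ 2 + 2 * π * b * k)) * cexp (-(τ:ℂ)^2/4) := by
        rw [tsum_congr h1, tsum_mul_right]
    _ = (1 / a ^ (1/2:ℂ)) * ((∑' n : ℤ, cexp (-π / a * ((n:ℂ) + I * b) ^ 2)) * cexp (-(τ:ℂ)^2/4)) := by
        rw [key]; ring
    _ = ((Real.sqrt π : ℂ) / τm) * ∑' n : ℤ, cexp (-(n:ℂ)^2 * π^2 / τm^2 + I * n * π * τ / τm) := by
        rw [← tsum_mul_right, tsum_congr h2, ha12, Complex.ofReal_div, one_div_div]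




open intervalIntegral in
lemma aux_cexp_integral {c : ℂ} (hc : c ≠ 0) (b : ℝ) :
    (∫ x in (0:ℝ)..b, Complex.exp (c * x)) = (Complex.exp (c * b) - 1) / c := by
  rw [integral_exp_mul_complex hc]
  norm_num

lemma aux_alg (A T w m p : ℂ) (h1 : m*p + w ≠ 0) (h2 : -(m*p) + w ≠ 0)
    (hD : m^2*p^2 - w^2 ≠ 0) :
    A*(T-1)/(Complex.I*(m*p+w)) + A*(T-1)/(Complex.I*(-(m*p)+w))
      = 2*Complex.I*w*(A*(T-1)/(m^2*p^2-w^2)) := by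
  have hI := Complex.I_ne_zero
  rw [div_add_div _ _ (mul_ne_zero hI h1) (mul_ne_zero hI h2), ← mul_div_assoc,
    div_eq_div_iff (mul_ne_zero (mul_ne_zero hI h1) (mul_ne_zero hI h2)) hD]
  linear_combination (2*Complex.I*w*(A*(T-1))*(m^2*p^2-w^2)) * Complex.I_sq

theorem periodized_gaussian_integral_Icc (τm : ℝ) (hτm : 0 < τm) (z : ℂ) (hz : 0 < z.im) :
    Summable (fun n : ℕ =>
      ‖Complex.exp (-((n : ℂ) + 1) ^ 2 * (π : ℂ) ^ 2 / (τm : ℂ) ^ 2) *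
          ((-1) ^ (n + 1) * Complex.exp (Complex.I * (τm : ℂ) * z) - 1) /
        (((n : ℂ) + 1) ^ 2 * (π : ℂ) ^ 2 - (τm : ℂ) ^ 2 * z ^ 2)‖) ∧
    (1 / (Real.sqrt π : ℂ)) *
      ∫ τ in (0:ℝ)..τm,
        ((∑' k : ℤ, Real.exp (-(τ + 2 * k * τm) ^ 2 / 4) : ℝ) : ℂ) *
          Complex.exp (Complex.I * z * τ) =
      Complex.I * (1 - Complex.exp (Complex.I * (τm : ℂ) * z)) / ((τm : ℂ) * z) +
        2 * Complex.I * (τm : ℂ) * z *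
          ∑' n : ℕ,
            Complex.exp (-((n : ℂ) + 1) ^ 2 * (π : ℂ) ^ 2 / (τm : ℂ) ^ 2) *
                ((-1) ^ (n + 1) * Complex.exp (Complex.I * (τm : ℂ) * z) - 1) /
              (((n : ℂ) + 1) ^ 2 * (π : ℂ) ^ 2 - (τm : ℂ) ^ 2 * z ^ 2) := by
  have hπ : (0:ℝ) < π := Real.pi_pos
  have hπ' : (π:ℂ) ≠ 0 := Complex.ofReal_ne_zero.mpr hπ.ne'
  have hτm' : (τm:ℂ) ≠ 0 := Complex.ofReal_ne_zero.mpr hτm.ne'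
  have hz0 : z ≠ 0 := fun h => by simp [h] at hz
  set E : ℂ := Complex.exp (Complex.I * τm * z) with hE
  -- the ℤ-indexed summand after integration
  set f : ℤ → ℂ := fun n =>
    cexp (-(n:ℂ)^2 * π^2 / τm^2) * ((-1)^n * E - 1) / (I * ((n:ℂ) * π + τm * z)) with hf_def
  -- the ℕ-indexed summand of the RHS
  set R : ℕ → ℂ := fun n =>
    cexp (-((n:ℂ)+1)^2 * π^2 / τm^2) * ((-1)^(n+1) * E - 1) /
      (((n:ℂ)+1)^2 * π^2 - τm^2 * z^2) with hR_def
  -- nonvanishing facts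
  have hden : ∀ n : ℤ, (n:ℂ) * π + τm * z ≠ 0 := by
    intro n h
    have : ((n:ℂ) * π + τm * z).im = τm * z.im := by simp
    rw [h] at this
    simp at this
    rcases this with h1 | h1; exacts [hτm.ne' h1, hz.ne' h1]
  -- norm bound for f
  have hexpA : ∀ n : ℤ, ‖cexp (-(n:ℂ)^2 * π^2 / τm^2)‖ = rexp (-(π^2/τm^2) * (n:ℝ)^2) := by
    intro n
    rw [show (-(n:ℂ)^2 * π^2 / τm^2) = ((-(π^2/τm^2) * (n:ℝ)^2 : ℝ) : ℂ) by push_cast; ring]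
    rw [Complex.norm_exp, Complex.ofReal_re]
  have hnormf : ∀ n : ℤ, ‖f n‖ ≤ rexp (-(π^2/τm^2) * (n:ℝ)^2) * ((‖E‖ + 1) / (τm * z.im)) := by
    intro n
    have h1 : ‖f n‖ = rexp (-(π^2/τm^2) * (n:ℝ)^2) * ‖(-1:ℂ)^n * E - 1‖ / ‖(n:ℂ) * π + τm * z‖ := by
      rw [hf_def]
      simp only []
      rw [norm_div, norm_mul, norm_mul, Complex.norm_I, one_mul, hexpA]
    rw [h1, mul_div_assoc]
    apply mul_le_mul_of_nonneg_left _ (Real.exp_nonneg _)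
    apply div_le_div₀ (by positivity) _ (by positivity) _
    · calc ‖(-1:ℂ)^n * E - 1‖ ≤ ‖(-1:ℂ)^n * E‖ + ‖(1:ℂ)‖ := norm_sub_le _ _
        _ = ‖E‖ + 1 := by simp
    · calc τm * z.im = ((n:ℂ) * π + τm * z).im := by simp
        _ ≤ |((n:ℂ) * π + τm * z).im| := le_abs_self _
        _ ≤ ‖(n:ℂ) * π + τm * z‖ := Complex.abs_im_le_norm _
  have hsummf : Summable f := by
    apply Summable.of_norm
    apply Summable.of_nonneg_of_le (fun n => norm_nonneg _) hnormf
    exact (aux_summable_int_gauss (by positivity)).mul_right _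
  have hsumm1 : Summable (fun n : ℕ => f (n+1)) :=
    hsummf.comp_injective (fun a b h => by omega)
  have hsumm2 : Summable (fun n : ℕ => f (-(n+1))) :=
    hsummf.comp_injective (fun a b h => by omega)
  -- pair identity
  have hden' : ∀ n : ℤ, (n:ℂ) * π - τm * z ≠ 0 := by
    intro n h
    have : ((n:ℂ) * π - τm * z).im = -(τm * z.im) := by simp
    rw [h] at this
    simp at this
    rcases this with h1 | h1; exacts [hτm.ne' h1, hz.ne' h1]
  have hdenR : ∀ n : ℕ, ((n:ℂ)+1)^2 * π^2 - τm^2 * z^2 ≠ 0 := by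
    intro n h
    apply mul_ne_zero (hden ((n:ℤ)+1)) (hden' ((n:ℤ)+1))
    rw [← h]; push_cast; ring
  have hpow : ∀ n : ℕ, ((-1:ℂ))^((n:ℤ)+1) = (-1:ℂ)^(n+1) := by
    intro n
    rw [show ((n:ℤ)+1) = ((n+1:ℕ):ℤ) by push_cast; ring, zpow_natCast]
  have e1 : ∀ n : ℕ, ((-1:ℂ))^(-((n:ℤ)+1)) = (-1:ℂ)^(n+1) := by
    intro n
    rw [zpow_neg, hpow, ← inv_pow]; norm_num
  have hfp : ∀ n : ℕ, f ((n:ℤ)+1) = cexp (-((n:ℂ)+1)^2 * ↑π^2 / ↑τm^2) *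
      ((-1:ℂ)^(n+1) * E - 1) / (I * (((n:ℂ)+1) * ↑π + ↑τm * z)) := by
    intro n
    simp only [hf_def]
    rw [hpow n]
    push_cast
    ring
  have hfm : ∀ n : ℕ, f (-((n:ℤ)+1)) = cexp (-((n:ℂ)+1)^2 * ↑π^2 / ↑τm^2) *
      ((-1:ℂ)^(n+1) * E - 1) / (I * (-(((n:ℂ)+1) * ↑π) + ↑τm * z)) := by
    intro n
    simp only [hf_def]
    rw [e1 n]
    push_cast [neg_sq]
    ring
  have hpair : ∀ n : ℕ, f (n+1) + f (-(n+1)) = 2 * I * τm * z * R n := by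
    intro n
    have h1 : ((n:ℂ)+1) * ↑π + ↑τm * z ≠ 0 := by
      have := hden ((n:ℤ)+1); push_cast at this; exact this
    have h2 : -(((n:ℂ)+1) * ↑π) + ↑τm * z ≠ 0 := by
      have := hden (-((n:ℤ)+1)); push_cast at this
      intro h; apply this; rw [← h]; ring
    have hD : ((n:ℂ)+1)^2 * (π:ℂ)^2 - (↑τm * z)^2 ≠ 0 := by
      rw [mul_pow]; exact hdenR n
    rw [hfp n, hfm n, aux_alg _ _ _ _ _ h1 h2 hD, hR_def]
    ring_nf
  have hf0 : f 0 = I * (1 - E) / (τm * z) := by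
    simp only [hf_def, Int.cast_zero, zpow_zero, one_mul, zero_mul, zero_add]
    rw [show (-(0:ℂ)^2 * π^2 / τm^2) = 0 by ring, Complex.exp_zero, one_mul]
    rw [div_eq_div_iff (mul_ne_zero Complex.I_ne_zero (mul_ne_zero hτm' hz0))
      (mul_ne_zero hτm' hz0)]
    have := Complex.I_sq
    linear_combination E * τm * z * this - τm * z * this
  have hsummR : Summable R := by
    have : R = fun n : ℕ => (f ((n:ℤ)+1) + f (-((n:ℤ)+1))) * (2 * I * τm * z)⁻¹ := by
      funext n
      rw [hpair n, mul_comm, inv_mul_cancel_left₀ (by simp [hτm.ne', hz0, Complex.I_ne_zero])]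
    rw [this]
    exact (hsumm1.add hsumm2).mul_right _
  refine ⟨summable_norm_iff.mpr hsummR, ?_⟩
  -- the integral computation
  have hint : (1 / (Real.sqrt π : ℂ)) * (∫ τ in (0:ℝ)..τm,
        ((∑' k : ℤ, Real.exp (-(τ + 2 * k * τm) ^ 2 / 4) : ℝ) : ℂ) *
          Complex.exp (Complex.I * z * τ)) = ∑' n : ℤ, f n := by
    set g : ℤ → ℝ → ℂ := fun n τ =>
      cexp (-(n:ℂ)^2 * ↑π^2 / ↑τm^2 + (I * ((n:ℂ) * ↑π + ↑τm * z) / ↑τm) * ↑τ) with hg_def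
    have hc_ne : ∀ n : ℤ, I * ((n:ℂ) * ↑π + ↑τm * z) / ↑τm ≠ 0 := fun n =>
      div_ne_zero (mul_ne_zero Complex.I_ne_zero (hden n)) hτm'
    have key1 : ∀ τ : ℝ, ((∑' k : ℤ, Real.exp (-(τ + 2 * k * τm) ^ 2 / 4) : ℝ) : ℂ) *
        cexp (I * z * τ) = ((Real.sqrt π : ℂ) / τm) * ∑' n : ℤ, g n τ := by
      intro τ
      rw [aux_poisson τm hτm τ, mul_assoc, ← tsum_mul_right]
      congr 1
      apply tsum_congr
      intro n
      rw [hg_def, ← Complex.exp_add]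
      congr 1
      field_simp
      ring
    have hmeas : ∀ n : ℤ, AEStronglyMeasurable (g n) (volume.restrict (Set.Ioc 0 τm)) := by
      intro n
      apply Continuous.aestronglyMeasurable
      exact Complex.continuous_exp.comp (continuous_const.add (continuous_const.mul Complex.continuous_ofReal))
    have hgnorm : ∀ n : ℤ, ∀ τ ∈ Set.Ioc (0:ℝ) τm, ‖g n τ‖ ≤ rexp (-(π^2/τm^2) * (n:ℝ)^2) := by
      intro n τ hτ
      rw [hg_def]
      simp only []
      rw [Complex.norm_exp]
      apply Real.exp_le_exp.mpr
      have harg : (-(n:ℂ)^2 * ↑π^2 / ↑τm^2 + (I * ((n:ℂ) * ↑π + ↑τm * z) / ↑τm) * ↑τ) =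
          ((-(π^2/τm^2) * (n:ℝ)^2 : ℝ) : ℂ) + ((π * n * τ / τm : ℝ) : ℂ) * I + z * ↑τ * I := by
        have : z = z.re + z.im * I := (Complex.re_add_im z).symm
        push_cast
        field_simp
        ring
      rw [harg]
      simp only [Complex.add_re, Complex.ofReal_re, Complex.mul_re, Complex.I_re, Complex.I_im,
        Complex.ofReal_im, Complex.mul_im]
      have h2 : (z * ↑τ).im = z.im * τ := by simp
      nlinarith [mul_pos hz hτ.1, hτ.1]
    have hlint : ∑' n : ℤ, ∫⁻ τ in Set.Ioc (0:ℝ) τm, ‖g n τ‖₊ ≠ ⊤ := by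
      have hle : ∀ n : ℤ, (∫⁻ τ in Set.Ioc (0:ℝ) τm, ‖g n τ‖₊) ≤
          ENNReal.ofReal (rexp (-(π^2/τm^2) * (n:ℝ)^2) * τm) := by
        intro n
        calc (∫⁻ τ in Set.Ioc (0:ℝ) τm, ‖g n τ‖₊)
            ≤ ∫⁻ _ in Set.Ioc (0:ℝ) τm, ENNReal.ofReal (rexp (-(π^2/τm^2) * (n:ℝ)^2)) := by
              apply setLIntegral_mono measurable_const
              intro τ hτ
              rw [← ENNReal.ofReal_coe_nnreal, coe_nnnorm]
              exact ENNReal.ofReal_le_ofReal (hgnorm n τ hτ)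
          _ = ENNReal.ofReal (rexp (-(π^2/τm^2) * (n:ℝ)^2)) * volume (Set.Ioc (0:ℝ) τm) :=
              setLIntegral_const _ _
          _ = ENNReal.ofReal (rexp (-(π^2/τm^2) * (n:ℝ)^2) * τm) := by
              rw [Real.volume_Ioc, sub_zero, ← ENNReal.ofReal_mul (Real.exp_nonneg _)]
      refine ne_top_of_le_ne_top ?_ (ENNReal.tsum_le_tsum hle)
      rw [← ENNReal.ofReal_tsum_of_nonneg (fun n => by positivity)
        ((aux_summable_int_gauss (by positivity)).mul_right τm)]
      exact ENNReal.ofReal_ne_top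
    have hval : ∀ n : ℤ, (∫ τ in Set.Ioc (0:ℝ) τm, g n τ) =
        cexp (-(n:ℂ)^2 * ↑π^2 / ↑τm^2) *
          ((cexp ((I * ((n:ℂ) * ↑π + ↑τm * z) / ↑τm) * ↑τm) - 1) * ↑τm /
            (I * ((n:ℂ) * ↑π + ↑τm * z))) := by
      intro n
      rw [← intervalIntegral.integral_of_le hτm.le]
      have : ∀ τ : ℝ, g n τ = cexp (-(n:ℂ)^2 * ↑π^2 / ↑τm^2) *
          cexp ((I * ((n:ℂ) * ↑π + ↑τm * z) / ↑τm) * ↑τ) := by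
        intro τ; rw [hg_def, ← Complex.exp_add]
      simp_rw [this]
      rw [intervalIntegral.integral_const_mul, aux_cexp_integral (hc_ne n)]
      rw [div_div_eq_mul_div]
    have hE1 : ∀ n : ℤ, cexp ((I * ((n:ℂ) * ↑π + ↑τm * z) / ↑τm) * ↑τm) = (-1:ℂ)^n * E := by
      intro n
      have : (I * ((n:ℂ) * ↑π + ↑τm * z) / ↑τm) * ↑τm = (n:ℂ) * (↑π * I) + I * ↑τm * z := by
        field_simp
      rw [this, Complex.exp_add, Complex.exp_int_mul, Complex.exp_pi_mul_I, hE]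
    rw [intervalIntegral.integral_of_le hτm.le]
    simp only [key1]
    rw [MeasureTheory.integral_const_mul, integral_tsum hmeas hlint, ← mul_assoc]
    have hsq : (Real.sqrt π : ℂ) ≠ 0 := Complex.ofReal_ne_zero.mpr (Real.sqrt_ne_zero'.mpr hπ)
    rw [show (1 / (Real.sqrt π : ℂ)) * ((Real.sqrt π : ℂ) / τm) = (↑τm)⁻¹ by
      field_simp]
    rw [← tsum_mul_left]
    apply tsum_congr
    intro n
    rw [hval n, hE1 n, hf_def]
    simp only []
    have hd := mul_ne_zero Complex.I_ne_zero (hden n)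
    rw [eq_div_iff hd]
    field_simp
    linear_combination ((-1:ℂ)^n * E - 1) * mul_inv_cancel₀ (hden n)
  rw [hint, tsum_of_add_one_of_neg_add_one hsumm1 hsumm2, hf0]
  have hS : (∑' n : ℕ, f ((n:ℤ)+1)) + ∑' n : ℕ, f (-((n:ℤ)+1)) = 2 * I * τm * z * tsum R := by
    rw [← Summable.tsum_add hsumm1 hsumm2, tsum_congr hpair, tsum_mul_left]
  linear_combination hS
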